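/- For every n ∈ ℕ, the polynomial A_n(z) = Σ_{k=0}^n C(n,k)·(n+k)!·z^{n−k} is a Hurwitz polynomial: every complex root z of A_n satisfies Re(z) < 0. -/

import Mathlib

open Complex

/-- The polynomial `A_n(z) = ∑_{k=0}^n C(n,k) (n+k)! z^{n-k}`. -/
noncomputable def Apoly (n : ℕ) (z : ℂ) : ℂ :=
  ∑ k ∈ Finset.range (n + 1),
    (n.choose k : ℂ) * (Nat.factorial (n + k) : ℂ) * z ^ (n - k)

lemma key_nat (n k : ℕ) (hk : k ≤ n + 1) :
    Nat.choose (n+2) (k+1) * ((n+k+3)*(n+k+2)) =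
      2*(n+2)*(2*n+3) * Nat.choose (n+1) k + (n+2)*(n+1) * Nat.choose n (k+1) := by
  have h1 : (n+2) * Nat.choose (n+1) k = Nat.choose (n+2) (k+1) * (k+1) :=
    Nat.add_one_mul_choose_eq (n+1) k
  have h2 : Nat.choose n (k+1) * (n+1) = Nat.choose (n+1) (k+1) * (n - k) := by
    have := Nat.choose_mul_succ_eq n (k+1)
    simpa [Nat.succ_sub_succ] using this
  have h3 : Nat.choose (n+1) (k+1) * (n+2) = Nat.choose (n+2) (k+1) * (n + 1 - k) := by
    have := Nat.choose_mul_succ_eq (n+1) (k+1)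
    simpa [Nat.succ_sub_succ] using this
  have hsc : (n+k+3)*(n+k+2) = 2*(2*n+3)*(k+1) + (n+1-k)*(n-k) := by
    rcases Nat.lt_or_ge k (n+1) with h | h
    · have hk' : k ≤ n := Nat.lt_succ_iff.mp h
      zify [hk', Nat.le_succ_of_le hk']
      ring
    · have : k = n + 1 := le_antisymm hk h
      subst this
      simp [Nat.sub_self]
      ring
  calc Nat.choose (n+2) (k+1) * ((n+k+3)*(n+k+2))
      = Nat.choose (n+2) (k+1) * (2*(2*n+3)*(k+1)) +
        Nat.choose (n+2) (k+1) * ((n+1-k)*(n-k)) := by rw [hsc]; ring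
    _ = 2*(2*n+3) * ((n+2) * Nat.choose (n+1) k) +
        (Nat.choose (n+2) (k+1) * (n+1-k)) * (n-k) := by rw [h1]; ring
    _ = _ := by
        rw [← h3]
        have h2' : (n+1).choose (k+1) * (n-k) = n.choose (k+1) * (n+1) := h2.symm
        calc 2*(2*n+3) * ((n+2) * Nat.choose (n+1) k) +
            (Nat.choose (n+1) (k+1) * (n+2)) * (n-k)
            = 2*(2*n+3) * ((n+2) * Nat.choose (n+1) k) +
              (n+2) * ((n+1).choose (k+1) * (n-k)) := by ring
          _ = 2*(2*n+3) * ((n+2) * Nat.choose (n+1) k) +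
              (n+2) * (n.choose (k+1) * (n+1)) := by rw [h2']
          _ = _ := by ring

lemma key_c (n k : ℕ) (hk : k ≤ n + 1) :
    ((n+2).choose (k+1) : ℂ) * (Nat.factorial (n+k+3) : ℂ) =
      (2*(n+2)*(2*n+3) : ℂ) * ((n+1).choose k : ℂ) * (Nat.factorial (n+1+k) : ℂ) +
      ((n+2)*(n+1) : ℂ) * (n.choose (k+1) : ℂ) * (Nat.factorial (n+1+k) : ℂ) := by
  have hfac : Nat.factorial (n+k+3) = (n+k+3)*(n+k+2) * Nat.factorial (n+1+k) := by
    have : n+k+3 = (n+1+k) + 2 := by omega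
    rw [this]
    simp [Nat.factorial_succ]
    ring
  have := key_nat n k hk
  rw [hfac]
  push_cast
  have hc : ((n+2).choose (k+1) : ℂ) * (((n:ℂ)+k+3)*((n:ℂ)+k+2)) =
      (2*(n+2)*(2*n+3) : ℂ) * ((n+1).choose k : ℂ) +
      ((n+2)*(n+1) : ℂ) * (n.choose (k+1) : ℂ) := by
    exact_mod_cast congrArg (Nat.cast : ℕ → ℂ) this
  calc ((n+2).choose (k+1) : ℂ) * (((n:ℂ)+k+3)*((n:ℂ)+k+2) * (Nat.factorial (n+1+k) : ℂ))
      = (((n+2).choose (k+1) : ℂ) * (((n:ℂ)+k+3)*((n:ℂ)+k+2))) * (Nat.factorial (n+1+k) : ℂ) := by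
        ring
    _ = _ := by rw [hc]; ring

lemma Apoly_rec (n : ℕ) (z : ℂ) :
    Apoly (n+2) z = (2*(n+2)*(2*n+3) : ℂ) * Apoly (n+1) z +
      ((n+2)*(n+1) : ℂ) * z^2 * Apoly n z := by
  unfold Apoly
  rw [Finset.sum_range_succ' (fun k => ((n+2).choose k : ℂ) * (Nat.factorial (n+2+k) : ℂ) * z ^ (n+2-k)) (n+2)]
  rw [Finset.mul_sum, Finset.mul_sum]
  rw [Finset.sum_range_succ' (fun k => ((n+2)*(n+1) : ℂ) * z^2 * ((n.choose k : ℂ) * (Nat.factorial (n+k) : ℂ) * z ^ (n-k))) n]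
  -- extend the range-n sum to range (n+2) (extra terms vanish: choose = 0)
  have hext : ∑ k ∈ Finset.range n, ((n+2)*(n+1) : ℂ) * z^2 *
      ((n.choose (k+1) : ℂ) * (Nat.factorial (n+(k+1)) : ℂ) * z ^ (n-(k+1)))
      = ∑ k ∈ Finset.range (n+2), ((n+2)*(n+1) : ℂ) *
      ((n.choose (k+1) : ℂ) * (Nat.factorial (n+1+k) : ℂ)) * z ^ (n+1-k) := by
    rw [Finset.sum_range_succ, Finset.sum_range_succ]
    have c1 : n.choose (n+1) = 0 := Nat.choose_eq_zero_of_lt (by omega)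
    have c2 : n.choose (n+2) = 0 := Nat.choose_eq_zero_of_lt (by omega)
    rw [c1, c2]
    simp only [Nat.cast_zero, zero_mul, mul_zero, add_zero]
    apply Finset.sum_congr rfl
    intro k hk
    have hk' : k < n := Finset.mem_range.mp hk
    have he : n+1-k = (n-(k+1)) + 2 := by omega
    have he2 : n+(k+1) = n+1+k := by omega
    rw [he, he2, pow_add]
    ring
  rw [hext]
  have hmain : ∀ k ∈ Finset.range (n+2),
      ((n+2).choose (k+1) : ℂ) * (Nat.factorial (n+2+(k+1)) : ℂ) * z ^ (n+2-(k+1))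
      = (2*(n+2)*(2*n+3) : ℂ) * (((n+1).choose k : ℂ) * (Nat.factorial (n+1+k) : ℂ) * z ^ (n+1-k)) +
        ((n+2)*(n+1) : ℂ) * ((n.choose (k+1) : ℂ) * (Nat.factorial (n+1+k) : ℂ)) * z ^ (n+1-k) := by
    intro k hk
    have hk' : k ≤ n + 1 := by have := Finset.mem_range.mp hk; omega
    have e1 : n+2+(k+1) = n+k+3 := by omega
    have e2 : n+2-(k+1) = n+1-k := by omega
    rw [e1, e2]
    have := key_c n k hk'
    calc ((n+2).choose (k+1) : ℂ) * (Nat.factorial (n+k+3) : ℂ) * z ^ (n+1-k)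
        = (((n+2).choose (k+1) : ℂ) * (Nat.factorial (n+k+3) : ℂ)) * z ^ (n+1-k) := by ring
      _ = _ := by rw [this]; ring
  rw [Finset.sum_congr rfl hmain, Finset.sum_add_distrib]
  have hnn : n+1+1 = n+2 := rfl
  rw [hnn]
  have hz0 : ((n+2).choose 0 : ℂ) * (Nat.factorial (n+2+0) : ℂ) * z ^ (n+2-0)
      = ((n+2)*(n+1) : ℂ) * z^2 * ((n.choose 0 : ℂ) * (Nat.factorial (n+0) : ℂ) * z ^ (n-0)) := by
    simp only [Nat.choose_zero_right, Nat.cast_one, one_mul, Nat.add_zero, Nat.sub_zero]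
    have : Nat.factorial (n+2) = (n+2)*(n+1)*Nat.factorial n := by
      simp [Nat.factorial_succ]; ring
    rw [this]
    have : z ^ (n+2) = z^2 * z^n := by rw [pow_add]; ring
    push_cast
    rw [this]
    ring
  rw [hz0]
  ring

lemma Apoly_zero (z : ℂ) : Apoly 0 z = 1 := by
  simp [Apoly]

lemma Apoly_one (z : ℂ) : Apoly 1 z = z + 2 := by
  simp [Apoly, Finset.sum_range_succ, Nat.factorial]

lemma Apoly_at_zero (n : ℕ) : Apoly n 0 = (Nat.factorial (2*n) : ℂ) := by
  unfold Apoly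
  rw [Finset.sum_eq_single_of_mem n (Finset.self_mem_range_succ n)]
  · have : 2*n = n+n := by omega
    simp [this]
  · intro k hk hkn
    have hk' : k < n := by
      have := Finset.mem_range.mp hk; omega
    rw [zero_pow (by omega : n - k ≠ 0), mul_zero]

lemma Apoly_main (n : ℕ) : ∀ z : ℂ, 0 ≤ z.re → z ≠ 0 →
    Apoly n z ≠ 0 ∧ 0 < (Apoly (n+1) z / (z * Apoly n z)).re := by
  induction n with
  | zero =>
    intro z hre hz
    refine ⟨by simp [Apoly_zero], ?_⟩
    have h : Apoly 1 z / (z * Apoly 0 z) = 1 + ((2:ℝ):ℂ) * z⁻¹ := by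
      rw [Apoly_one, Apoly_zero]
      field_simp
      norm_num
    have h1 : 0 ≤ (z⁻¹).re := by
      rw [Complex.inv_re]
      exact div_nonneg hre (Complex.normSq_nonneg z)
    rw [h]
    simp only [Complex.add_re, Complex.one_re, Complex.re_ofReal_mul]
    linarith
  | succ n ih =>
    intro z hre hz
    obtain ⟨h0, hf⟩ := ih z hre hz
    have hne1 : Apoly (n+1) z ≠ 0 := by
      intro h
      rw [h] at hf
      simp at hf
    refine ⟨hne1, ?_⟩
    set f : ℂ := Apoly (n+1) z / (z * Apoly n z) with hfdef
    have hfne : f ≠ 0 := by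
      intro h
      rw [h] at hf
      simp at hf
    have key : Apoly (n+1+1) z / (z * Apoly (n+1) z)
        = ((2*(n+2)*(2*n+3) : ℝ) : ℂ) * z⁻¹ + (((n+2)*(n+1) : ℝ) : ℂ) * f⁻¹ := by
      rw [show Apoly (n+1+1) z = Apoly (n+2) z from rfl, Apoly_rec, hfdef]
      field_simp
      push_cast
      ring
    have h1 : 0 ≤ (z⁻¹).re := by
      rw [Complex.inv_re]
      exact div_nonneg hre (Complex.normSq_nonneg z)
    have h2 : 0 < (f⁻¹).re := by
      rw [Complex.inv_re]
      exact div_pos hf (Complex.normSq_pos.mpr hfne)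
    rw [key]
    simp only [Complex.add_re, Complex.re_ofReal_mul]
    have c1pos : (0:ℝ) < 2*(n+2)*(2*n+3) := by positivity
    have c2pos : (0:ℝ) < (n+2)*(n+1) := by positivity
    nlinarith

/-- `A_n` is a Hurwitz (stable) polynomial: all its complex roots have negative
real part. -/
theorem Apoly_isHurwitz (n : ℕ) : ∀ z : ℂ, Apoly n z = 0 → z.re < 0 := by
  intro z hroot
  by_contra h
  push_neg at h
  rcases eq_or_ne z 0 with rfl | hz
  · rw [Apoly_at_zero] at hroot
    exact Nat.cast_ne_zero.mpr (Nat.factorial_ne_zero _) hroot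
  · exact (Apoly_main n z h hz).1 hroot
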